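/- Let f : 𝕋³ × ℝ³ → [0,∞) be measurable with finite second moment ∫_{𝕋³×ℝ³} |ξ|² f dξ dx < ∞, and set ρ_f(x) := ∫_{ℝ³} f(x,ξ) dξ and m_f(x) := ∫_{ℝ³} ξ f(x,ξ) dξ. Let ε > 0, R > 0, define u_f^ε := m_f/(ε + ρ_f) and the truncation χ_R(w) := w if |w| ≤ R and χ_R(w) := 0 otherwise. Then ∫_{𝕋³×ℝ³} f(x,ξ) ( χ_R(u_f^ε(x)) − ξ )·ξ dξ dx ≤ ∫_{𝕋³} |m_f(x)|²/(ρ_f(x)+ε) dx − ∫_{𝕋³×ℝ³} |ξ|² f dξ dx ≤ 0. -/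

import Mathlib

open MeasureTheory Filter Real Set
open scoped RealInnerProductSpace

noncomputable section

/-- Position/velocity space `ℝ³` with the Euclidean norm. -/
abbrev E3 := EuclideanSpace ℝ (Fin 3)

/-- A fundamental domain of the flat torus `𝕋³ = ℝ³/ℤ³`; integrals over the torus are
integrals over this cube. -/
def cube : Set E3 := {x | ∀ i, x i ∈ Icc (0:ℝ) 1}

/-- The truncation `χ_R(w) = w` if `|w| ≤ R` and `χ_R(w) = 0` otherwise. -/
def chiR (R : ℝ) (w : E3) : E3 := if ‖w‖ ≤ R then w else 0

set_option maxHeartbeats 1000000 in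
/-- For `f : 𝕋³ × ℝ³ → [0,∞)` measurable with finite mass and second moment,
`ρ_f = ∫ f dξ`, `m_f = ∫ ξ f dξ`, `u_f^ε = m_f/(ε+ρ_f)`, one has
`∫∫ f (χ_R(u_f^ε) − ξ)·ξ dξ dx ≤ ∫ |m_f|²/(ρ_f+ε) dx − ∫∫ |ξ|² f dξ dx ≤ 0`. -/
theorem truncated_drag_nonpositive (ε R : ℝ) (hε : 0 < ε) (hR : 0 < R)
    (f : E3 → E3 → ℝ) (ρ : E3 → ℝ) (m : E3 → E3)
    (hmeas : Measurable fun q : E3 × E3 => f q.1 q.2)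
    (hfnn : ∀ x ξ, 0 ≤ f x ξ)
    (hρ : ∀ x, ρ x = ∫ ξ, f x ξ)
    (hm : ∀ x, m x = ∫ ξ, f x ξ • ξ)
    (hfint : Integrable (fun q : E3 × E3 => f q.1 q.2) ((volume.restrict cube).prod volume))
    (hmom2 : Integrable (fun q : E3 × E3 => ‖q.2‖ ^ 2 * f q.1 q.2)
      ((volume.restrict cube).prod volume)) :
    (∫ x in cube, ∫ ξ, (∑ i, (chiR R ((ρ x + ε)⁻¹ • m x) i - ξ i) * ξ i) * f x ξ)
        ≤ (∫ x in cube, ‖m x‖ ^ 2 / (ρ x + ε)) - ∫ x in cube, ∫ ξ, ‖ξ‖ ^ 2 * f x ξ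
      ∧ (∫ x in cube, ‖m x‖ ^ 2 / (ρ x + ε)) - (∫ x in cube, ∫ ξ, ‖ξ‖ ^ 2 * f x ξ) ≤ 0 := by
  classical
  set g2 : E3 → ℝ := fun x => ∫ ξ, ‖ξ‖ ^ 2 * f x ξ with hg2def
  set g1 : E3 → ℝ := fun x => ‖m x‖ ^ 2 / (ρ x + ε) with hg1def
  set c : E3 → E3 := fun x => chiR R ((ρ x + ε)⁻¹ • m x) with hcdef
  set φ : E3 → ℝ := fun x => ⟪c x, m x⟫ with hφdef
  have hfx_meas : ∀ x, Measurable (f x) := fun x =>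
    hmeas.comp (measurable_prodMk_left)
  -- measurability of ρ, m, c, φ, g1
  have hρsm : StronglyMeasurable ρ := by
    have : ρ = fun x => ∫ ξ, f x ξ := funext hρ
    rw [this]
    exact hmeas.stronglyMeasurable.integral_prod_right'
  have hmsm : StronglyMeasurable m := by
    have : m = fun x => ∫ ξ, f x ξ • ξ := funext hm
    rw [this]
    exact (hmeas.smul measurable_snd).stronglyMeasurable.integral_prod_right'
  have humeas : Measurable fun x => (ρ x + ε)⁻¹ • m x :=
    ((hρsm.measurable.add_const ε).inv).smul hmsm.measurable
  have hchi : Measurable (chiR R) := by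
    unfold chiR
    exact Measurable.ite (measurableSet_le measurable_norm measurable_const)
      measurable_id measurable_const
  have hcmeas : Measurable c := hchi.comp humeas
  have hφmeas : Measurable φ := hcmeas.inner hmsm.measurable
  have hg1meas : Measurable g1 :=
    (hmsm.measurable.norm.pow_const 2).div (hρsm.measurable.add_const ε)
  -- the key pointwise (a.e.) facts
  have hkey : ∀ᵐ x ∂(volume.restrict cube),
      (∫ ξ, (∑ i, (c x i - ξ i) * ξ i) * f x ξ) = φ x - g2 x ∧
        φ x ≤ g1 x ∧ 0 ≤ φ x ∧ g1 x ≤ g2 x := by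
    filter_upwards [hfint.prod_right_ae, hmom2.prod_right_ae] with x h1 h2
    have h1 : Integrable (fun ξ => f x ξ) := h1
    have h2 : Integrable (fun ξ => ‖ξ‖ ^ 2 * f x ξ) := h2
    have hA : 0 ≤ ρ x := by rw [hρ]; exact integral_nonneg (hfnn x)
    have hden : 0 < ρ x + ε := by linarith
    have hC : 0 ≤ g2 x :=
      integral_nonneg fun ξ => mul_nonneg (by positivity) (hfnn x ξ)
    have hsum : Integrable (fun ξ => f x ξ + ‖ξ‖ ^ 2 * f x ξ) := h1.add h2
    have hint1 : Integrable (fun ξ => ‖ξ‖ * f x ξ) := by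
      refine hsum.mono'
        ((measurable_norm.mul (hfx_meas x)).aestronglyMeasurable) ?_
      refine Eventually.of_forall fun ξ => ?_
      have hb : ‖ξ‖ ≤ 1 + ‖ξ‖ ^ 2 := by nlinarith [norm_nonneg ξ]
      have hmono : ‖ξ‖ * f x ξ ≤ (1 + ‖ξ‖ ^ 2) * f x ξ :=
        mul_le_mul_of_nonneg_right hb (hfnn x ξ)
      rw [Real.norm_of_nonneg (mul_nonneg (norm_nonneg ξ) (hfnn x ξ))]
      nlinarith [hmono]
    have hintsmul : Integrable (fun ξ => f x ξ • ξ) := by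
      refine hint1.mono' (((hfx_meas x).smul measurable_id).aestronglyMeasurable) ?_
      refine Eventually.of_forall fun ξ => le_of_eq ?_
      show ‖f x ξ • ξ‖ = ‖ξ‖ * f x ξ
      rw [norm_smul, Real.norm_of_nonneg (hfnn x ξ), mul_comm]
    have hBnn : 0 ≤ ∫ ξ, ‖ξ‖ * f x ξ :=
      integral_nonneg fun ξ => mul_nonneg (norm_nonneg _) (hfnn x ξ)
    have hB : ‖m x‖ ≤ ∫ ξ, ‖ξ‖ * f x ξ := by
      rw [hm]
      refine (norm_integral_le_integral_norm _).trans_eq ?_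
      refine integral_congr_ae (Eventually.of_forall fun ξ => ?_)
      show ‖f x ξ • ξ‖ = ‖ξ‖ * f x ξ
      rw [norm_smul, Real.norm_of_nonneg (hfnn x ξ), mul_comm]
    -- Cauchy–Schwarz: (∫ ‖ξ‖ f)² ≤ (∫ f) (∫ ‖ξ‖² f)
    have hCS : (∫ ξ, ‖ξ‖ * f x ξ) ^ 2 ≤ (ρ x) * g2 x := by
      rcases eq_or_lt_of_le hA with hA0 | hA0
      · have hf0 : (fun ξ => f x ξ) =ᵐ[volume] 0 := by
          rw [← integral_eq_zero_iff_of_nonneg (hfnn x) h1, ← hρ, ← hA0]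
        have hB0 : (∫ ξ, ‖ξ‖ * f x ξ) = 0 := by
          rw [integral_eq_zero_iff_of_nonneg
            (fun ξ => mul_nonneg (norm_nonneg _) (hfnn x ξ)) hint1]
          filter_upwards [hf0] with ξ hξ
          simp [hξ]
        rw [hB0, ← hA0]
        simp [hC]
      · set A := ρ x
        set B := ∫ ξ, ‖ξ‖ * f x ξ
        set t := B / A with htdef
        have hquad : 0 ≤ ∫ ξ, f x ξ * (‖ξ‖ - t) ^ 2 :=
          integral_nonneg fun ξ => mul_nonneg (hfnn x ξ) (sq_nonneg _)
        have hexp : (fun ξ => f x ξ * (‖ξ‖ - t) ^ 2) =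
            fun ξ => (‖ξ‖ ^ 2 * f x ξ - (2 * t) * (‖ξ‖ * f x ξ)) + (t ^ 2) * f x ξ := by
          funext ξ; ring
        have hi1 : Integrable (fun ξ => ‖ξ‖ ^ 2 * f x ξ - 2 * t * (‖ξ‖ * f x ξ)) :=
          h2.sub (hint1.const_mul _)
        rw [hexp, integral_add hi1 (h1.const_mul _),
          integral_sub h2 (hint1.const_mul _), integral_const_mul, integral_const_mul,
          ← hρ] at hquad
        have hAne : A ≠ 0 := ne_of_gt hA0
        have ht : t * A = B := div_mul_cancel₀ B hAne
        nlinarith [mul_nonneg hA0.le hquad, ht, hA0, sq_nonneg (t * A - B)]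
    have hmsq : ‖m x‖ ^ 2 ≤ (ρ x) * g2 x := by
      nlinarith [hB, hBnn, hCS, norm_nonneg (m x)]
    have hg1g2 : g1 x ≤ g2 x := by
      rw [hg1def]
      rw [div_le_iff₀ hden]
      nlinarith [hmsq, hC, hε.le]
    have hg1nn : 0 ≤ g1 x := div_nonneg (by positivity) hden.le
    -- value of φ
    have hφfacts : φ x ≤ g1 x ∧ 0 ≤ φ x := by
      by_cases hu : ‖(ρ x + ε)⁻¹ • m x‖ ≤ R
      · have hcx : c x = (ρ x + ε)⁻¹ • m x := by simp [hcdef, chiR, hu]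
        have heq1 : φ x = g1 x := by
          show ⟪c x, m x⟫ = ‖m x‖ ^ 2 / (ρ x + ε)
          rw [hcx, real_inner_smul_left, real_inner_self_eq_norm_sq, div_eq_inv_mul]
        exact ⟨le_of_eq heq1, heq1 ▸ hg1nn⟩
      · have hcx : c x = 0 := by simp [hcdef, chiR, hu]
        have heq0 : φ x = 0 := by
          show ⟪c x, m x⟫ = 0
          rw [hcx, inner_zero_left]
        exact ⟨heq0 ▸ hg1nn, le_of_eq heq0.symm⟩
    -- value of the inner integral
    have hinner_eq : (∫ ξ, (∑ i, (c x i - ξ i) * ξ i) * f x ξ) = φ x - g2 x := by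
      have hpt : ∀ ξ : E3, (∑ i, (c x i - ξ i) * ξ i) * f x ξ
          = ⟪c x, f x ξ • ξ⟫ - ‖ξ‖ ^ 2 * f x ξ := by
        intro ξ
        have h1' : ⟪c x, f x ξ • ξ⟫ = f x ξ * ∑ i, c x i * ξ i := by
          rw [real_inner_smul_right]
          simp [PiLp.inner_apply, RCLike.inner_apply, conj_trivial]
          left; exact Finset.sum_congr rfl fun i _ => mul_comm _ _
        have h2' : ‖ξ‖ ^ 2 = ∑ i, ξ i * ξ i := by
          rw [EuclideanSpace.norm_eq, Real.sq_sqrt (by positivity)]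
          simp only [Real.norm_eq_abs, sq_abs, sq, abs_mul_abs_self]
        rw [h1', h2']
        simp only [Finset.sum_mul, Finset.mul_sum, ← Finset.sum_sub_distrib]
        exact Finset.sum_congr rfl fun i _ => by ring
      have hint_inner : Integrable (fun ξ => ⟪c x, f x ξ • ξ⟫) :=
        hintsmul.const_inner (c x)
      calc (∫ ξ, (∑ i, (c x i - ξ i) * ξ i) * f x ξ)
          = ∫ ξ, (⟪c x, f x ξ • ξ⟫ - ‖ξ‖ ^ 2 * f x ξ) := by
            exact integral_congr_ae (Eventually.of_forall fun ξ => hpt ξ)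
        _ = (∫ ξ, ⟪c x, f x ξ • ξ⟫) - ∫ ξ, ‖ξ‖ ^ 2 * f x ξ :=
            integral_sub hint_inner h2
        _ = φ x - g2 x := by
            rw [integral_inner hintsmul (c x), ← hm, hφdef]
    exact ⟨hinner_eq, hφfacts.1, hφfacts.2, hg1g2⟩
  -- integrability over the cube
  have hg2int : Integrable g2 (volume.restrict cube) := hmom2.integral_prod_left
  have hφint : Integrable φ (volume.restrict cube) := by
    refine hg2int.mono' hφmeas.aestronglyMeasurable ?_
    filter_upwards [hkey] with x ⟨_, h1, h2, h3⟩
    rw [Real.norm_of_nonneg h2]; linarith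
  have hg1int : Integrable g1 (volume.restrict cube) := by
    refine hg2int.mono' hg1meas.aestronglyMeasurable ?_
    filter_upwards [hkey] with x ⟨_, h1, h2, h3⟩
    rw [Real.norm_of_nonneg (le_trans h2 h1)]; linarith
  constructor
  · have heq : (∫ x in cube, ∫ ξ, (∑ i, (c x i - ξ i) * ξ i) * f x ξ)
        = (∫ x in cube, φ x) - ∫ x in cube, g2 x := by
      rw [← integral_sub hφint hg2int]
      exact integral_congr_ae (hkey.mono fun x hx => hx.1)
    calc (∫ x in cube, ∫ ξ, (∑ i, (c x i - ξ i) * ξ i) * f x ξ)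
        = (∫ x in cube, φ x) - ∫ x in cube, g2 x := heq
      _ ≤ (∫ x in cube, g1 x) - ∫ x in cube, g2 x := by
          have := integral_mono_ae hφint hg1int (hkey.mono fun x hx => hx.2.1)
          linarith
  · have := integral_mono_ae hg1int hg2int (hkey.mono fun x hx => hx.2.2.2)
    linarith
end
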